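/- Let Δ_{3k+1} be the clique complex of the complement of P_{3k+1}. The number of faces F with |F| = k that are contained in some facet of cardinality k+1 but in no facet of cardinality greater than k+1 is (k+1)^2; the number of such faces with |F| = k-1 is k(k+1)/2; and every face with |F| = k-2 is contained in a facet of cardinality greater than k+1. -/
import Mathlib


open Finset

attribute [local instance] Classical.propDecidable

/-- `s` is a face of the clique complex `Δ_n = Δ(P_nᶜ)` of the complement of the path
`P_n` on `[n] = {1, …, n}`: a subset of `[n]` whose elements have pairwise differences
at least 2. -/
def isFaceP (n : ℕ) (s : Finset ℕ) : Prop :=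
  s ⊆ Finset.Icc 1 n ∧ ∀ i ∈ s, ∀ j ∈ s, i < j → i + 2 ≤ j

/-- `s` is a facet (maximal face) of `Δ_n = Δ(P_nᶜ)`. -/
def isFacetP (n : ℕ) (s : Finset ℕ) : Prop :=
  isFaceP n s ∧ ∀ t, isFaceP n t → s ⊆ t → t = s

lemma face_subset {n : ℕ} {s t : Finset ℕ} (hs : isFaceP n s) (h : t ⊆ s) : isFaceP n t :=
  ⟨h.trans hs.1, fun i hi j hj => hs.2 i (h hi) j (h hj)⟩

/-- every face extends to a facet -/
lemma exists_facet {n : ℕ} {F : Finset ℕ} (hF : isFaceP n F) :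
    ∃ G, isFacetP n G ∧ F ⊆ G := by
  classical
  set S := (Finset.Icc 1 n).powerset.filter (fun t => isFaceP n t ∧ F ⊆ t) with hS
  have hFS : F ∈ S := by
    simp only [hS, mem_filter, mem_powerset]
    exact ⟨hF.1, hF, Finset.Subset.refl F⟩
  obtain ⟨G, hGS, hmax⟩ := S.exists_max_image Finset.card ⟨F, hFS⟩
  simp only [hS, mem_filter, mem_powerset] at hGS
  refine ⟨G, ⟨hGS.2.1, ?_⟩, hGS.2.2⟩
  intro t ht hsub
  have htS : t ∈ S := by
    simp only [hS, mem_filter, mem_powerset]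
    exact ⟨ht.1, ht, hGS.2.2.trans hsub⟩
  exact (Finset.eq_of_subset_of_card_le (s := G) (t := t) hsub (hmax t htS)).symm

/-- maximality: every point of `[1,n]` is within distance 1 of a facet -/
lemma facet_cover {n : ℕ} {G : Finset ℕ} (hG : isFacetP n G) :
    ∀ x ∈ Finset.Icc 1 n, ∃ y ∈ G, x ≤ y + 1 ∧ y ≤ x + 1 := by
  intro x hx
  by_contra hcon
  have hdich : ∀ y ∈ G, y + 2 ≤ x ∨ x + 2 ≤ y := by
    intro y hy
    by_contra hcc
    push_neg at hcc
    exact hcon ⟨y, hy, by omega, by omega⟩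
  have hface : isFaceP n (insert x G) := by
    constructor
    · exact Finset.insert_subset hx hG.1.1
    · intro i hi j hj hij
      rcases Finset.mem_insert.1 hi with hix | hiG <;>
        rcases Finset.mem_insert.1 hj with hjx | hjG
      · omega
      · rcases hdich j hjG with h | h <;> omega
      · rcases hdich i hiG with h | h <;> omega
      · exact hG.1.2 i hiG j hjG hij
  have := hG.2 _ hface (Finset.subset_insert x G)
  have hxG : x ∈ G := this ▸ Finset.mem_insert_self x G
  rcases hdich x hxG with h | h <;> omega

lemma facet_card_lb {k : ℕ} {G : Finset ℕ} (hG : isFacetP (3 * k + 1) G) :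
    k + 1 ≤ G.card := by
  have hsub : Finset.Icc 1 (3 * k + 1) ⊆ G.biUnion (fun y => Finset.Icc (y - 1) (y + 1)) := by
    intro x hx
    obtain ⟨y, hy, h1, h2⟩ := facet_cover hG x hx
    exact Finset.mem_biUnion.2 ⟨y, hy, Finset.mem_Icc.2 ⟨by omega, by omega⟩⟩
  have h1 := Finset.card_le_card hsub
  have h2 := Finset.card_biUnion_le (s := G) (t := fun y => Finset.Icc (y - 1) (y + 1))
  have h3 : ∑ y ∈ G, (Finset.Icc (y - 1) (y + 1)).card ≤ ∑ _y ∈ G, 3 := by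
    refine Finset.sum_le_sum fun y _ => ?_
    rw [Nat.card_Icc]; omega
  rw [Finset.sum_const, smul_eq_mul] at h3
  rw [Nat.card_Icc] at h1
  omega

/-- no facet bigger than c contains F iff no face bigger than c contains F -/
lemma no_big_facet {n c : ℕ} {F : Finset ℕ}
    (h : ¬ ∃ G, isFacetP n G ∧ c < G.card ∧ F ⊆ G) :
    ∀ G, isFaceP n G → F ⊆ G → G.card ≤ c := by
  intro G hG hFG
  by_contra hc
  obtain ⟨H, hH, hGH⟩ := exists_facet hG
  exact h ⟨H, hH, by have := Finset.card_le_card hGH; omega, hFG.trans hGH⟩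

def capA (n m : ℕ) (A : ℕ → ℕ) (j : ℕ) : ℕ :=
  if j = 0 then (A 0 - 1) / 2
  else if j < m then (A j - A (j - 1) - 2) / 2
  else (n - A (m - 1)) / 2

lemma exists_enum (F : Finset ℕ) : ∃ A : ℕ → ℕ,
    F = (Finset.range F.card).image A ∧ ∀ i j, i < j → j < F.card → A i < A j := by
  classical
  refine ⟨fun i => if h : i < F.card then F.orderEmbOfFin rfl ⟨i, h⟩ else 0, ?_, ?_⟩
  · ext x
    simp only [mem_image, mem_range]
    constructor
    · intro hx
      have hx' : x ∈ Set.range (F.orderEmbOfFin rfl) := by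
        rw [Finset.range_orderEmbOfFin]; exact hx
      obtain ⟨⟨i, hi⟩, hix⟩ := hx'
      exact ⟨i, hi, by simp only [hi, dif_pos]; exact hix⟩
    · rintro ⟨i, hi, rfl⟩
      simp only [hi, dif_pos]
      exact Finset.orderEmbOfFin_mem F rfl ⟨i, hi⟩
  · intro i j hij hj
    have hi : i < F.card := hij.trans hj
    simp only [hi, hj, dif_pos]
    exact (F.orderEmbOfFin rfl).strictMono (by exact_mod_cast hij)

lemma ext_face {n : ℕ} {F : Finset ℕ} (hF : isFaceP n F) (hm : 1 ≤ F.card)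
    {A : ℕ → ℕ} (hFA : F = (Finset.range F.card).image A)
    (hsm : ∀ i j, i < j → j < F.card → A i < A j) :
    ∃ G, isFaceP n G ∧ F ⊆ G ∧
      F.card + ∑ j ∈ Finset.range (F.card + 1), capA n F.card A j ≤ G.card := by
  classical
  set m := F.card with hmdef
  have hmemF : ∀ i, i < m → A i ∈ F := by
    intro i hi; rw [hFA]; exact mem_image.2 ⟨i, mem_range.2 hi, rfl⟩
  have hbd : ∀ i, i < m → 1 ≤ A i ∧ A i ≤ n := by
    intro i hi
    have := hF.1 (hmemF i hi)
    exact mem_Icc.1 this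
  have hmono : ∀ i j, i ≤ j → j < m → A i ≤ A j := by
    intro i j hij hj
    rcases Nat.eq_or_lt_of_le hij with rfl | h
    · exact le_rfl
    · exact (hsm i j h hj).le
  have hgap2 : ∀ i j, i < j → j < m → A i + 2 ≤ A j := by
    intro i j hij hj
    exact hF.2 (A i) (hmemF i (hij.trans hj)) (A j) (hmemF j hj) (hsm i j hij hj)
  have hFmem : ∀ x ∈ F, ∃ a, a < m ∧ x = A a := by
    intro x hx
    rw [hFA] at hx
    obtain ⟨a, ha, rfl⟩ := mem_image.1 hx
    exact ⟨a, mem_range.1 ha, rfl⟩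
  -- the added point sets
  set P0 : Finset ℕ := (Finset.Icc 1 (capA n m A 0)).image (fun t => A 0 - 2 * t) with hP0def
  set PB : Finset ℕ := (Finset.range m).biUnion
    (fun i => (Finset.Icc 1 (capA n m A (i + 1))).image (fun t => A i + 2 * t)) with hPBdef
  have hcap0 : 2 * capA n m A 0 ≤ A 0 - 1 := by
    have h : capA n m A 0 = (A 0 - 1) / 2 := by simp [capA]
    rw [h]; omega
  have hcapB : ∀ i, i < m → 2 * capA n m A (i + 1) ≤
      (if i + 1 < m then A (i + 1) - A i - 2 else n - A (m - 1)) := by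
    intro i hi
    by_cases h : i + 1 < m
    · have hc : capA n m A (i + 1) = (A (i + 1) - A i - 2) / 2 := by
        simp [capA, h]
      rw [hc]; simp only [h, if_pos]; omega
    · have hc : capA n m A (i + 1) = (n - A (m - 1)) / 2 := by
        simp only [capA, if_neg (by omega : ¬ i + 1 = 0), if_neg h]
      rw [hc]; simp only [h, if_neg, if_false]; omega
  -- profiles
  set G : Finset ℕ := F ∪ (P0 ∪ PB) with hGdef
  have hFG : F ⊆ G := subset_union_left
  have hprofP0 : ∀ x ∈ P0, ∃ t, 1 ≤ t ∧ 2 * t + 1 ≤ A 0 ∧ x = A 0 - 2 * t := by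
    intro x hx
    rw [hP0def] at hx
    obtain ⟨t, ht, rfl⟩ := mem_image.1 hx
    rw [mem_Icc] at ht
    exact ⟨t, ht.1, by have := hcap0; omega, rfl⟩
  have hprofPB : ∀ x ∈ PB, ∃ i t, i < m ∧ 1 ≤ t ∧ x = A i + 2 * t ∧
      (i + 1 < m → A i + 2 * t + 2 ≤ A (i + 1)) ∧ (¬ i + 1 < m → A i + 2 * t ≤ n) := by
    intro x hx
    rw [hPBdef] at hx
    obtain ⟨i, hi, hx⟩ := mem_biUnion.1 hx
    rw [mem_range] at hi
    obtain ⟨t, ht, rfl⟩ := mem_image.1 hx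
    rw [mem_Icc] at ht
    have hc := hcapB i hi
    refine ⟨i, t, hi, ht.1, rfl, ?_, ?_⟩
    · intro h
      simp only [h, if_pos] at hc
      have hg := hgap2 i (i+1) (by omega) h
      omega
    · intro h
      simp only [h, if_neg, if_false] at hc
      have hieq : i = m - 1 := by omega
      have hbi := (hbd i hi).2
      subst hieq
      omega
  have hprof : ∀ x ∈ G, (∃ a, a < m ∧ x = A a) ∨
      (∃ t, 1 ≤ t ∧ 2 * t + 1 ≤ A 0 ∧ x = A 0 - 2 * t) ∨
      (∃ i t, i < m ∧ 1 ≤ t ∧ x = A i + 2 * t ∧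
        (i + 1 < m → A i + 2 * t + 2 ≤ A (i + 1)) ∧ (¬ i + 1 < m → A i + 2 * t ≤ n)) := by
    intro x hx
    rcases mem_union.1 hx with hx | hx
    · exact Or.inl (hFmem x hx)
    · rcases mem_union.1 hx with hx | hx
      · exact Or.inr (Or.inl (hprofP0 x hx))
      · exact Or.inr (Or.inr (hprofPB x hx))
  -- key separation
  have key : ∀ x ∈ G, ∀ y ∈ G, x < y → x + 2 ≤ y := by
    intro x hx y hy hxy
    rcases hprof x hx with ⟨a, ha, rfl⟩ | ⟨t, ht1, ht2, rfl⟩ | ⟨i, t, hi, ht1, rfl, hlt, hge⟩ <;>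
      rcases hprof y hy with ⟨b, hb, rfl⟩ | ⟨s, hs1, hs2, rfl⟩ | ⟨j, s, hj, hs1, rfl, hlt', hge'⟩
    · -- F F
      have hab : a < b := by
        by_contra hc
        have := hmono b a (by omega) ha
        omega
      exact hgap2 a b hab hb
    · -- F P0
      have := hmono 0 a (by omega) ha
      omega
    · -- F PB
      rcases Nat.lt_or_ge j a with h | h
      · have hj1 : j + 1 < m ∨ j + 1 = m := by omega
        rcases hj1 with h1 | h1
        · have h2 := hlt' h1
          have h3 := hmono (j+1) a (by omega) ha
          omega
        · omega
      · have := hmono a j h hj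
        omega
    · -- P0 F
      have := hmono 0 b (by omega) hb
      omega
    · -- P0 P0
      omega
    · -- P0 PB
      have := hmono 0 j (by omega) hj
      omega
    · -- PB F
      rcases Nat.lt_or_ge i b with h | h
      · have hi1 : i + 1 < m ∨ i + 1 = m := by omega
        rcases hi1 with h1 | h1
        · have h2 := hlt h1
          have := hmono (i+1) b (by omega) hb
          omega
        · omega
      · have := hmono b i h hi
        omega
    · -- PB P0
      have := hmono 0 i (by omega) hi
      omega
    · -- PB PB
      rcases Nat.lt_trichotomy i j with h | h | h
      · have h1 : i + 1 < m := by omega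
        have h2 := hlt h1
        have := hmono (i+1) j (by omega) hj
        omega
      · subst h
        omega
      · have h1 : j + 1 < m := by omega
        have h2 := hlt' h1
        have := hmono (j+1) i (by omega) hi
        omega
  -- G is a face
  have hGIcc : G ⊆ Finset.Icc 1 n := by
    intro x hx
    rw [mem_Icc]
    rcases hprof x hx with ⟨a, ha, rfl⟩ | ⟨t, ht1, ht2, rfl⟩ | ⟨i, t, hi, ht1, rfl, hlt, hge⟩
    · exact hbd a ha
    · have h0 := (hbd 0 (by omega)).2
      omega
    · have hb1 := (hbd i hi).1
      refine ⟨by omega, ?_⟩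
      by_cases h : i + 1 < m
      · have h2 := hlt h
        have h3 := (hbd (i+1) h).2
        omega
      · exact hge h
  have hGface : isFaceP n G := ⟨hGIcc, fun i hi j hj hij => key i hi j hj hij⟩
  -- cardinality
  have hcardP0 : P0.card = capA n m A 0 := by
    rw [hP0def, Finset.card_image_of_injOn, Nat.card_Icc]
    · omega
    · intro t ht s hs hts
      simp only [Finset.coe_Icc, Set.mem_Icc] at ht hs
      have h1 : 2 * t + 1 ≤ A 0 := by have := hcap0; omega
      have h2 : 2 * s + 1 ≤ A 0 := by have := hcap0; omega
      simp only at hts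
      omega
  have hcardPB : PB.card = ∑ i ∈ Finset.range m, capA n m A (i + 1) := by
    rw [hPBdef, Finset.card_biUnion]
    · refine Finset.sum_congr rfl fun i hi => ?_
      rw [Finset.card_image_of_injOn, Nat.card_Icc]
      · omega
      · intro t ht s hs hts
        simp only at hts
        omega
    · intro i hi j hj hij
      simp only [Finset.mem_coe, Finset.mem_range] at hi hj
      simp only [Finset.disjoint_left]
      intro x hxi hxj
      obtain ⟨t, ht, rfl⟩ := mem_image.1 hxi
      obtain ⟨s, hs, heq⟩ := mem_image.1 hxj
      rw [mem_Icc] at ht hs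
      have hci := hcapB i hi
      have hcj := hcapB j hj
      rcases Nat.lt_trichotomy i j with h | h | h
      · have h1 : i + 1 < m := by omega
        simp only [h1, if_pos] at hci
        have := hmono (i+1) j (by omega) hj
        omega
      · exact hij h
      · have h1 : j + 1 < m := by omega
        simp only [h1, if_pos] at hcj
        have := hmono (j+1) i (by omega) hi
        omega
  have hdisjFP : Disjoint F (P0 ∪ PB) := by
    rw [Finset.disjoint_left]
    intro x hxF hxP
    obtain ⟨a, ha, hxa⟩ := hFmem x hxF
    subst hxa
    rcases mem_union.1 hxP with hx | hx
    · obtain ⟨t, ht1, ht2, heq⟩ := hprofP0 _ hx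
      have := hmono 0 a (by omega) ha
      omega
    · obtain ⟨i, t, hi, ht1, heq, hlt, hge⟩ := hprofPB _ hx
      rcases Nat.lt_or_ge i a with h | h
      · have h1 : i + 1 < m ∨ i + 1 = m := by omega
        rcases h1 with h1 | h1
        · have h2 := hlt h1
          have := hmono (i+1) a (by omega) ha
          omega
        · omega
      · have := hmono a i h hi
        omega
  have hdisjP0PB : Disjoint P0 PB := by
    rw [Finset.disjoint_left]
    intro x hx0 hxB
    obtain ⟨t, ht1, ht2, hxt⟩ := hprofP0 _ hx0
    obtain ⟨i, s, hi, hs1, heq, hlt, hge⟩ := hprofPB _ hxB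
    have := hmono 0 i (by omega) hi
    omega
  have hcardG : G.card = m + (capA n m A 0 + ∑ i ∈ Finset.range m, capA n m A (i + 1)) := by
    rw [hGdef, Finset.card_union_of_disjoint hdisjFP,
      Finset.card_union_of_disjoint hdisjP0PB, hcardP0, hcardPB, hmdef]
  refine ⟨G, hGface, hFG, ?_⟩
  rw [hcardG, Finset.sum_range_succ']
  omega

/-- parity bit of the j-th gap region -/
def eA (n m : ℕ) (A : ℕ → ℕ) (j : ℕ) : ℕ :=
  if j = 0 then (A 0 - 1) % 2
  else if j < m then (A j - A (j - 1) - 2) % 2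
  else (n - A (m - 1)) % 2

lemma eA_le_one (n m : ℕ) (A : ℕ → ℕ) (j : ℕ) : eA n m A j ≤ 1 := by
  unfold eA; split_ifs <;> omega

lemma caps_sum {n : ℕ} {F : Finset ℕ} (hF : isFaceP n F) (hm : 1 ≤ F.card)
    {A : ℕ → ℕ} (hFA : F = (Finset.range F.card).image A)
    (hsm : ∀ i j, i < j → j < F.card → A i < A j) :
    2 * ∑ j ∈ Finset.range (F.card + 1), capA n F.card A j +
      ∑ j ∈ Finset.range (F.card + 1), eA n F.card A j + 2 * (F.card - 1) + 1 = n := by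
  set m := F.card with hmdef
  have hmemF : ∀ i, i < m → A i ∈ F := by
    intro i hi; rw [hFA]; exact mem_image.2 ⟨i, mem_range.2 hi, rfl⟩
  have hbd : ∀ i, i < m → 1 ≤ A i ∧ A i ≤ n := by
    intro i hi; exact mem_Icc.1 (hF.1 (hmemF i hi))
  have hgap2 : ∀ i, i + 1 < m → A i + 2 ≤ A (i + 1) := by
    intro i hi
    exact hF.2 (A i) (hmemF i (by omega)) (A (i+1)) (hmemF (i+1) hi) (hsm i (i+1) (by omega) hi)
  have hpartial : ∀ i, i < m →
      2 * (∑ j ∈ Finset.range (i + 1), capA n m A j) +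
        (∑ j ∈ Finset.range (i + 1), eA n m A j) + 2 * i + 1 = A i := by
    intro i
    induction i with
    | zero =>
      intro h0
      rw [Finset.sum_range_one, Finset.sum_range_one]
      have hc : capA n m A 0 = (A 0 - 1) / 2 := by simp [capA]
      have he : eA n m A 0 = (A 0 - 1) % 2 := by simp [eA]
      have := (hbd 0 h0).1
      rw [hc, he]; omega
    | succ i ih =>
      intro hi
      have hii : i < m := by omega
      have h1 := ih hii
      have hs1 : ∑ j ∈ Finset.range (i + 1 + 1), capA n m A j =
          (∑ j ∈ Finset.range (i + 1), capA n m A j) + capA n m A (i + 1) :=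
        Finset.sum_range_succ _ _
      have hs2 : ∑ j ∈ Finset.range (i + 1 + 1), eA n m A j =
          (∑ j ∈ Finset.range (i + 1), eA n m A j) + eA n m A (i + 1) :=
        Finset.sum_range_succ _ _
      rw [hs1, hs2]
      have hc : capA n m A (i + 1) = (A (i + 1) - A i - 2) / 2 := by
        simp [capA, hi]
      have he : eA n m A (i + 1) = (A (i + 1) - A i - 2) % 2 := by
        simp [eA, hi]
      have hg := hgap2 i hi
      rw [hc, he]; omega
  have hm1 : m - 1 + 1 = m := by omega
  have hlast := hpartial (m - 1) (by omega)
  rw [hm1] at hlast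
  rw [Finset.sum_range_succ, Finset.sum_range_succ]
  have hc : capA n m A m = (n - A (m - 1)) / 2 := by
    simp [capA]; omega
  have he : eA n m A m = (n - A (m - 1)) % 2 := by
    simp [eA]; omega
  have hbm := hbd (m - 1) (by omega)
  rw [hc, he]; omega

lemma sum_eq_one_support {s : Finset ℕ} {f : ℕ → ℕ} (h : ∑ j ∈ s, f j = 1) :
    ∃ r ∈ s, f r = 1 ∧ ∀ j ∈ s, j ≠ r → f j = 0 := by
  classical
  obtain ⟨r, hr, hfr⟩ := Finset.exists_ne_zero_of_sum_ne_zero (by omega : ∑ j ∈ s, f j ≠ 0)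
  have h2 := Finset.add_sum_erase s f hr
  have hfr1 : f r = 1 := by
    have : ∑ j ∈ s.erase r, f j ≥ 0 := Nat.zero_le _
    omega
  have hz : ∑ j ∈ s.erase r, f j = 0 := by omega
  refine ⟨r, hr, hfr1, fun j hj hjr => ?_⟩
  exact (Finset.sum_eq_zero_iff.1 hz) j (Finset.mem_erase.2 ⟨hjr, hj⟩)

lemma sum_eq_two_support {s : Finset ℕ} {f : ℕ → ℕ} (h : ∑ j ∈ s, f j = 2) :
    ∃ p ∈ s, ∃ q ∈ s, p ≤ q ∧
      ∀ j ∈ s, f j = (if j = p then 1 else 0) + (if j = q then 1 else 0) := by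
  classical
  obtain ⟨a, ha, hfa⟩ := Finset.exists_ne_zero_of_sum_ne_zero (by omega : ∑ j ∈ s, f j ≠ 0)
  have h2 := Finset.add_sum_erase s f ha
  by_cases hfa2 : f a = 2
  · have hz : ∑ j ∈ s.erase a, f j = 0 := by omega
    refine ⟨a, ha, a, ha, le_rfl, fun j hj => ?_⟩
    by_cases hja : j = a
    · subst hja; simp [hfa2]
    · have := (Finset.sum_eq_zero_iff.1 hz) j (Finset.mem_erase.2 ⟨hja, hj⟩)
      simp [hja, this]
  · have hfa1 : f a = 1 := by
      have : ∑ j ∈ s.erase a, f j ≥ 0 := Nat.zero_le _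
      omega
    have hz : ∑ j ∈ s.erase a, f j = 1 := by omega
    obtain ⟨b, hb, hfb, hrest⟩ := sum_eq_one_support hz
    have hba : b ≠ a := (Finset.mem_erase.1 hb).1
    have hbs : b ∈ s := (Finset.mem_erase.1 hb).2
    have hform : ∀ j ∈ s, f j = (if j = a then 1 else 0) + (if j = b then 1 else 0) := by
      intro j hj
      by_cases hja : j = a
      · subst hja; simp [hfa1, (Ne.symm hba)]
      · by_cases hjb : j = b
        · subst hjb; simp [hfb, hja]
        · have := hrest j (Finset.mem_erase.2 ⟨hja, hj⟩) hjb
          simp [hja, hjb, this]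
    rcases le_or_gt a b with hab | hab
    · exact ⟨a, ha, b, hbs, hab, hform⟩
    · refine ⟨b, hbs, a, ha, by omega, fun j hj => ?_⟩
      rw [hform j hj]; omega

/-- parametrization of the `k`-faces counted in part 1 -/
def g1 (p r i : ℕ) : ℕ :=
  3 * i + 1 + (if p < i + 1 then 0 else 1) + 2 * (if r < i + 1 then 1 else 0)

/-- parametrization of the `(k-1)`-faces counted in part 2 -/
def g2 (p q i : ℕ) : ℕ :=
  3 * i + 2 + 2 * ((if p < i + 1 then 1 else 0) + (if q < i + 1 then 1 else 0))

lemma g1_step {p r : ℕ} {i j : ℕ} (h : i < j) : g1 p r i + 2 ≤ g1 p r j := by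
  unfold g1; split_ifs <;> omega

lemma g2_step {p q : ℕ} {i j : ℕ} (h : i < j) : g2 p q i + 2 ≤ g2 p q j := by
  unfold g2; split_ifs <;> omega

lemma face1 {k p r : ℕ} (hk : 1 ≤ k) (hp : p ≤ k) (hr : r ≤ k) :
    isFaceP (3 * k + 1) ((Finset.range k).image (g1 p r)) := by
  constructor
  · intro x hx
    obtain ⟨i, hi, rfl⟩ := mem_image.1 hx
    rw [mem_range] at hi
    rw [mem_Icc]
    unfold g1; split_ifs <;> omega
  · intro x hx y hy hxy
    obtain ⟨i, hi, rfl⟩ := mem_image.1 hx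
    obtain ⟨j, hj, rfl⟩ := mem_image.1 hy
    rcases Nat.lt_trichotomy i j with h | h | h
    · exact g1_step h
    · subst h; omega
    · have := g1_step (p := p) (r := r) h; omega

lemma card1 {k p r : ℕ} : ((Finset.range k).image (g1 p r)).card = k := by
  rw [Finset.card_image_of_injOn, Finset.card_range]
  intro i _ j _ hij
  rcases Nat.lt_trichotomy i j with h | h | h
  · have := g1_step (p := p) (r := r) h; omega
  · exact h
  · have := g1_step (p := p) (r := r) h; omega

lemma face2 {k p q : ℕ} (hk : 1 ≤ k) (hp : p < k) (hq : q < k) :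
    isFaceP (3 * k + 1) ((Finset.range (k - 1)).image (g2 p q)) := by
  constructor
  · intro x hx
    obtain ⟨i, hi, rfl⟩ := mem_image.1 hx
    rw [mem_range] at hi
    rw [mem_Icc]
    unfold g2; split_ifs <;> omega
  · intro x hx y hy hxy
    obtain ⟨i, hi, rfl⟩ := mem_image.1 hx
    obtain ⟨j, hj, rfl⟩ := mem_image.1 hy
    rcases Nat.lt_trichotomy i j with h | h | h
    · exact g2_step h
    · subst h; omega
    · have := g2_step (p := p) (q := q) h; omega

lemma card2 {k p q : ℕ} : ((Finset.range (k - 1)).image (g2 p q)).card = k - 1 := by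
  rw [Finset.card_image_of_injOn, Finset.card_range]
  intro i _ j _ hij
  rcases Nat.lt_trichotomy i j with h | h | h
  · have := g2_step (p := p) (q := q) h; omega
  · exact h
  · have := g2_step (p := p) (q := q) h; omega

/-- region localization helper -/
lemma region_helper {m : ℕ} {A : ℕ → ℕ} {x : ℕ}
    (hd : ∀ i, i < m → x + 2 ≤ A i ∨ A i + 2 ≤ x) :
    ∃ j, j ≤ m ∧ (j = 0 ∨ A (j - 1) + 2 ≤ x) ∧ (j = m ∨ x + 2 ≤ A j) := by
  classical
  set T := (Finset.range m).filter (fun i => x + 2 ≤ A i) with hT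
  rcases T.eq_empty_or_nonempty with hTe | hTne
  · refine ⟨m, le_rfl, ?_, Or.inl rfl⟩
    by_cases hm0 : m = 0
    · exact Or.inl hm0
    · refine Or.inr ?_
      have hnotT : m - 1 ∉ T := by rw [hTe]; exact notMem_empty _
      rw [hT, mem_filter, mem_range] at hnotT
      rcases hd (m - 1) (by omega) with h | h
      · exact absurd (by exact ⟨by omega, h⟩) hnotT
      · exact h
  · set j := T.min' hTne with hj
    have hjT : j ∈ T := T.min'_mem hTne
    rw [hT, mem_filter, mem_range] at hjT
    refine ⟨j, by omega, ?_, Or.inr hjT.2⟩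
    by_cases hj0 : j = 0
    · exact Or.inl hj0
    · refine Or.inr ?_
      have hnotT : j - 1 ∉ T := by
        intro hc
        have := T.min'_le _ hc
        omega
      rw [hT, mem_filter, mem_range] at hnotT
      rcases hd (j - 1) (by omega) with h | h
      · exact absurd (by exact ⟨by omega, h⟩) hnotT
      · exact h

lemma ub1 {k p r : ℕ} (hk : 1 ≤ k) (hp : p ≤ k) (hr : r ≤ k) {G : Finset ℕ}
    (hG : isFaceP (3 * k + 1) G) (hsub : (Finset.range k).image (g1 p r) ⊆ G) :
    G.card ≤ k + 1 := by
  classical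
  set φ := (Finset.range k).image (g1 p r) with hφ
  have hcardφ : φ.card = k := card1
  have claim : ∀ x ∈ G \ φ,
      (if r = 0 then 1 else g1 p r (r - 1) + 2) ≤ x ∧
      x ≤ (if r = k then 3 * k + 1 else g1 p r r - 2) := by
    intro x hx
    rw [mem_sdiff] at hx
    have hxIcc := mem_Icc.1 (hG.1 hx.1)
    have hd : ∀ i, i < k → x + 2 ≤ g1 p r i ∨ g1 p r i + 2 ≤ x := by
      intro i hi
      have hmem : g1 p r i ∈ G := hsub (mem_image.2 ⟨i, mem_range.2 hi, rfl⟩)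
      have hne : x ≠ g1 p r i := by
        intro hc
        exact hx.2 (by rw [hφ]; exact hc ▸ mem_image.2 ⟨i, mem_range.2 hi, rfl⟩)
      rcases Nat.lt_trichotomy x (g1 p r i) with h | h | h
      · exact Or.inl (hG.2 x hx.1 _ hmem h)
      · exact absurd h hne
      · exact Or.inr (hG.2 _ hmem x hx.1 h)
    obtain ⟨j, hjk, hleft, hright⟩ := region_helper (m := k) hd
    have hjr : j = r := by
      by_contra hne
      rcases Nat.eq_or_lt_of_le hjk with hjeq | hjlt
      · -- j = k ≠ r
        have hAx : g1 p r (k - 1) + 2 ≤ x := by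
          rcases hleft with h0 | h; · omega
          · rw [hjeq] at h; exact h
        have hval : 3 * k ≤ g1 p r (k - 1) := by
          unfold g1; split_ifs <;> omega
        omega
      · by_cases hj0 : j = 0
        · -- j = 0 ≠ r
          have hAx : x + 2 ≤ g1 p r 0 := by
            rcases hright with h0 | h; · omega
            · rw [hj0] at h; exact h
          have hval : g1 p r 0 ≤ 2 := by
            unfold g1; split_ifs <;> omega
          omega
        · -- 0 < j < k, j ≠ r
          have hl : g1 p r (j - 1) + 2 ≤ x := by
            rcases hleft with h0 | h; · omega
            · exact h
          have hrgt : x + 2 ≤ g1 p r j := by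
            rcases hright with h0 | h; · omega
            · exact h
          have hval : g1 p r j ≤ g1 p r (j - 1) + 3 := by
            unfold g1; split_ifs <;> omega
          omega
    rw [hjr] at hleft hright
    constructor
    · by_cases hr0 : r = 0
      · simp only [hr0, if_pos]; omega
      · simp only [hr0, if_neg, if_false]
        rcases hleft with h0 | h; · omega
        · exact h
    · by_cases hrk : r = k
      · simp only [hrk, if_pos]; omega
      · simp only [hrk, if_neg, if_false]
        rcases hright with h0 | h; · omega
        · omega
  have hone : ∀ x ∈ G \ φ, ∀ y ∈ G \ φ, x = y := by
    intro x hx y hy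
    have hcx := claim x hx
    have hcy := claim y hy
    have hwidth : (if r = k then 3 * k + 1 else g1 p r r - 2) ≤
        (if r = 0 then 1 else g1 p r (r - 1) + 2) + 1 := by
      unfold g1; split_ifs <;> omega
    rw [mem_sdiff] at hx hy
    rcases Nat.lt_trichotomy x y with h | h | h
    · have := hG.2 x hx.1 y hy.1 h; omega
    · exact h
    · have := hG.2 y hy.1 x hx.1 h; omega
  have hle1 : (G \ φ).card ≤ 1 := Finset.card_le_one.2 hone
  have hsubφ : φ ⊆ G := hsub
  have := Finset.card_sdiff_add_card_eq_card hsubφ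
  omega

lemma forward1 {k : ℕ} (hk : 1 ≤ k) {F : Finset ℕ} (hF : isFaceP (3 * k + 1) F)
    (hcard : F.card = k)
    (hnb : ∀ G, isFaceP (3 * k + 1) G → F ⊆ G → G.card ≤ k + 1) :
    ∃ p r, p < k + 1 ∧ r < k + 1 ∧ F = (Finset.range k).image (g1 p r) := by
  obtain ⟨A, hFA, hsm⟩ := exists_enum F
  have hm : 1 ≤ F.card := by omega
  obtain ⟨G, hGf, hFG, hGc⟩ := ext_face hF hm hFA hsm
  have hid := caps_sum hF hm hFA hsm
  rw [hcard] at hFA hsm hGc hid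
  have hcaple : ∑ j ∈ Finset.range (k + 1), capA (3 * k + 1) k A j ≤ 1 := by
    have := hnb G hGf hFG; omega
  have hSE_le : ∑ j ∈ Finset.range (k + 1), eA (3 * k + 1) k A j ≤ k + 1 := by
    calc ∑ j ∈ Finset.range (k + 1), eA (3 * k + 1) k A j
        ≤ ∑ _j ∈ Finset.range (k + 1), 1 :=
          Finset.sum_le_sum (fun j _ => eA_le_one (3 * k + 1) k A j)
      _ = k + 1 := by simp
  have hSC : ∑ j ∈ Finset.range (k + 1), capA (3 * k + 1) k A j = 1 := by omega
  have hSEk : ∑ j ∈ Finset.range (k + 1), eA (3 * k + 1) k A j = k := by omega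
  obtain ⟨r, hrmem, hr1, hr0⟩ := sum_eq_one_support hSC
  have hz : ∑ j ∈ Finset.range (k + 1), (1 - eA (3 * k + 1) k A j) = 1 := by
    have hsum : ∑ j ∈ Finset.range (k + 1),
        ((1 - eA (3 * k + 1) k A j) + eA (3 * k + 1) k A j) =
        ∑ _j ∈ Finset.range (k + 1), 1 :=
      Finset.sum_congr rfl (fun j _ => by have := eA_le_one (3 * k + 1) k A j; omega)
    rw [Finset.sum_add_distrib] at hsum
    simp only [Finset.sum_const, smul_eq_mul, mul_one, Finset.card_range] at hsum
    omega
  obtain ⟨p, hpmem, hp1, hp0⟩ := sum_eq_one_support hz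
  rw [mem_range] at hrmem hpmem
  have hep : eA (3 * k + 1) k A p = 0 := by
    have := eA_le_one (3 * k + 1) k A p; omega
  have hej : ∀ j, j < k + 1 → j ≠ p → eA (3 * k + 1) k A j = 1 := by
    intro j hj hjp
    have h := hp0 j (mem_range.2 hj) hjp
    have := eA_le_one (3 * k + 1) k A j
    omega
  have hcapv : ∀ j, j < k + 1 → capA (3 * k + 1) k A j = (if j = r then 1 else 0) := by
    intro j hj
    by_cases hjr : j = r
    · subst hjr; simp [hr1]
    · simp [hjr, hr0 j (mem_range.2 hj) hjr]
  have hev : ∀ j, j < k + 1 → eA (3 * k + 1) k A j = (if j = p then 0 else 1) := by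
    intro j hj
    by_cases hjp : j = p
    · subst hjp; simp [hep]
    · simp [hjp, hej j hj hjp]
  -- basic face facts
  have hmemF : ∀ i, i < k → A i ∈ F := by
    intro i hi; rw [hFA]; exact mem_image.2 ⟨i, mem_range.2 hi, rfl⟩
  have hbd : ∀ i, i < k → 1 ≤ A i ∧ A i ≤ 3 * k + 1 := by
    intro i hi; exact mem_Icc.1 (hF.1 (hmemF i hi))
  have hgap : ∀ i, i + 1 < k → A i + 2 ≤ A (i + 1) := by
    intro i hi
    exact hF.2 (A i) (hmemF i (by omega)) (A (i + 1)) (hmemF (i + 1) hi)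
      (hsm i (i + 1) (by omega) hi)
  have hAg : ∀ i, i < k → A i = g1 p r i := by
    intro i
    induction i with
    | zero =>
      intro h0
      have hc0 : capA (3 * k + 1) k A 0 = (A 0 - 1) / 2 := by simp [capA]
      have he0 : eA (3 * k + 1) k A 0 = (A 0 - 1) % 2 := by simp [eA]
      have hcv := hcapv 0 (by omega)
      have hev0 := hev 0 (by omega)
      have hA01 := (hbd 0 h0).1
      rw [hc0] at hcv
      rw [he0] at hev0
      unfold g1
      split_ifs at * <;> omega
    | succ i ih =>
      intro hi
      have hAi := ih (by omega)
      have hc1 : capA (3 * k + 1) k A (i + 1) = (A (i + 1) - A i - 2) / 2 := by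
        simp [capA, hi]
      have he1 : eA (3 * k + 1) k A (i + 1) = (A (i + 1) - A i - 2) % 2 := by
        simp [eA, hi]
      have hcv := hcapv (i + 1) (by omega)
      have hev1 := hev (i + 1) (by omega)
      rw [hc1] at hcv
      rw [he1] at hev1
      have hg := hgap i hi
      have hgoal : A (i + 1) = A i + 2 + 2 * (if i + 1 = r then 1 else 0) +
          (if i + 1 = p then 0 else 1) := by
        split_ifs at * <;> omega
      rw [hgoal, hAi]
      unfold g1
      split_ifs <;> omega
  refine ⟨p, r, hpmem, hrmem, ?_⟩
  rw [hFA]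
  exact Finset.image_congr (fun i hi => hAg i (mem_range.1 hi))

lemma key_of_image_eq1 {k p r p' r' : ℕ}
    (heq : (Finset.range k).image (g1 p r) = (Finset.range k).image (g1 p' r')) :
    ∀ i, i < k → g1 p r i = g1 p' r' i := by
  have h1 : (fun i : Fin k => g1 p r i.1) =
      ((Finset.range k).image (g1 p r)).orderEmbOfFin card1 :=
    Finset.orderEmbOfFin_unique card1
      (fun x => mem_image.2 ⟨x.1, mem_range.2 x.2, rfl⟩)
      (fun a b hab => by
        have := g1_step (p := p) (r := r) (show (a : ℕ) < (b : ℕ) from hab); omega)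
  have h2 : (fun i : Fin k => g1 p' r' i.1) =
      ((Finset.range k).image (g1 p r)).orderEmbOfFin card1 :=
    Finset.orderEmbOfFin_unique card1
      (fun x => by rw [heq]; exact mem_image.2 ⟨x.1, mem_range.2 x.2, rfl⟩)
      (fun a b hab => by
        have := g1_step (p := p') (r := r') (show (a : ℕ) < (b : ℕ) from hab); omega)
  intro i hi
  have := congrFun (h1.trans h2.symm) ⟨i, hi⟩
  simpa using this

lemma inj1_r {k p r p' r' : ℕ} (hr : r ≤ k) (hr' : r' ≤ k)
    (hkey : ∀ i, i < k → g1 p r i = g1 p' r' i) : r' ≤ r := by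
  by_contra hc
  push_neg at hc
  have hrk : r < k := by omega
  have := hkey r hrk
  unfold g1 at this
  split_ifs at this <;> omega

lemma inj1_p {k p r p' r' : ℕ} (hp : p ≤ k) (hp' : p' ≤ k) (hrr : r = r')
    (hkey : ∀ i, i < k → g1 p r i = g1 p' r' i) : p' ≤ p := by
  by_contra hc
  push_neg at hc
  have hpk : p < k := by omega
  have := hkey p hpk
  subst hrr
  unfold g1 at this
  split_ifs at this <;> omega

lemma inj1 {k : ℕ} {p r p' r' : ℕ} (hp : p ≤ k) (hr : r ≤ k) (hp' : p' ≤ k) (hr' : r' ≤ k)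
    (heq : (Finset.range k).image (g1 p r) = (Finset.range k).image (g1 p' r')) :
    p = p' ∧ r = r' := by
  have hkey := key_of_image_eq1 heq
  have hkey' := key_of_image_eq1 heq.symm
  have hrr : r = r' := le_antisymm (inj1_r hr' hr hkey') (inj1_r hr hr' hkey)
  exact ⟨le_antisymm (inj1_p hp' hp hrr.symm hkey') (inj1_p hp hp' hrr hkey), hrr⟩

lemma ub2 {k p q : ℕ} (hk : 1 ≤ k) (hpq : p ≤ q) (hq : q < k) {G : Finset ℕ}
    (hG : isFaceP (3 * k + 1) G) (hsub : (Finset.range (k - 1)).image (g2 p q) ⊆ G) :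
    G.card ≤ k + 1 := by
  classical
  set φ := (Finset.range (k - 1)).image (g2 p q) with hφ
  have hcardφ : φ.card = k - 1 := card2
  set W : ℕ → ℕ := fun j => if j = 0 then 1 else g2 p q (j - 1) + 2 with hW
  set V : ℕ → ℕ := fun j => if j + 1 = k then 3 * k + 1 else g2 p q j - 2 with hV
  have claim : ∀ x ∈ G \ φ, ∃ j, (j = p ∨ j = q) ∧ W j ≤ x ∧ x ≤ V j := by
    intro x hx
    rw [mem_sdiff] at hx
    have hxIcc := mem_Icc.1 (hG.1 hx.1)
    have hd : ∀ i, i < k - 1 → x + 2 ≤ g2 p q i ∨ g2 p q i + 2 ≤ x := by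
      intro i hi
      have hmem : g2 p q i ∈ G := hsub (mem_image.2 ⟨i, mem_range.2 hi, rfl⟩)
      have hne : x ≠ g2 p q i := by
        intro hc
        exact hx.2 (by rw [hφ]; exact hc ▸ mem_image.2 ⟨i, mem_range.2 hi, rfl⟩)
      rcases Nat.lt_trichotomy x (g2 p q i) with h | h | h
      · exact Or.inl (hG.2 x hx.1 _ hmem h)
      · exact absurd h hne
      · exact Or.inr (hG.2 _ hmem x hx.1 h)
    obtain ⟨j, hjk, hleft, hright⟩ := region_helper (m := k - 1) hd
    have hjpq : j = p ∨ j = q := by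
      by_contra hne
      push_neg at hne
      by_cases hj0 : j = 0
      · -- j = 0, p ≠ 0, q ≠ 0 hence k ≥ 2 and window empty
        have hk2 : 2 ≤ k := by omega
        have hAx : x + 2 ≤ g2 p q 0 := by
          rcases hright with h0 | h
          · omega
          · rw [hj0] at h; exact h
        have hval : g2 p q 0 ≤ 2 := by
          unfold g2; split_ifs <;> omega
        omega
      · rcases Nat.eq_or_lt_of_le hjk with hjeq | hjlt
        · -- j = k - 1 ≥ 1
          have hAx : g2 p q (j - 1) + 2 ≤ x := by
            rcases hleft with h0 | h
            · omega
            · exact h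
          have hqlt : q < k - 1 := by omega
          have hval : 3 * k ≤ g2 p q (j - 1) := by
            unfold g2; split_ifs <;> omega
          omega
        · -- 0 < j < k - 1
          have hl : g2 p q (j - 1) + 2 ≤ x := by
            rcases hleft with h0 | h
            · omega
            · exact h
          have hrgt : x + 2 ≤ g2 p q j := by
            rcases hright with h0 | h
            · omega
            · exact h
          have hval : g2 p q j ≤ g2 p q (j - 1) + 3 := by
            unfold g2; split_ifs <;> omega
          omega
    refine ⟨j, hjpq, ?_, ?_⟩
    · rw [hW]
      simp only
      split_ifs with h0
      · omega
      · rcases hleft with hl | hl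
        · omega
        · exact hl
    · rw [hV]
      simp only
      split_ifs with hjm
      · omega
      · rcases hright with hr' | hr'
        · omega
        · omega
  -- widths
  have hwidth : ∀ j, (j = p ∨ j = q) → V j ≤ W j + 1 + 2 * (if p = q then 1 else 0) := by
    intro j hj
    rw [hW, hV]
    simp only
    rcases hj with rfl | rfl <;> unfold g2 <;> split_ifs <;> omega
  -- at most two extra elements
  have hle2 : (G \ φ).card ≤ 2 := by
    by_contra hc
    push_neg at hc
    obtain ⟨a, b, c, ha, hb, hc', hab, hac, hbc⟩ := Finset.two_lt_card_iff.1 hc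
    obtain ⟨ja, hja, hWa, hVa⟩ := claim a ha
    obtain ⟨jb, hjb, hWb, hVb⟩ := claim b hb
    obtain ⟨jc, hjc, hWc, hVc⟩ := claim c hc'
    have haG := (mem_sdiff.1 ha).1
    have hbG := (mem_sdiff.1 hb).1
    have hcG := (mem_sdiff.1 hc').1
    have gap : ∀ x ∈ G, ∀ y ∈ G, x ≠ y → x + 2 ≤ y ∨ y + 2 ≤ x := by
      intro x hxm y hym hxy
      rcases Nat.lt_trichotomy x y with h | h | h
      · exact Or.inl (hG.2 x hxm y hym h)
      · exact absurd h hxy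
      · exact Or.inr (hG.2 y hym x hxm h)
    have gab := gap a haG b hbG hab
    have gac := gap a haG c hcG hac
    have gbc := gap b hbG c hcG hbc
    by_cases hpq2 : p = q
    · -- all in the same window of width ≤ 3
      have hjap : ja = p := by rcases hja with h | h <;> omega
      have hjbp : jb = p := by rcases hjb with h | h <;> omega
      have hjcp : jc = p := by rcases hjc with h | h <;> omega
      rw [hjap] at hWa hVa
      rw [hjbp] at hWb hVb
      rw [hjcp] at hWc hVc
      have hw := hwidth p (Or.inl rfl)
      rw [if_pos hpq2] at hw
      omega
    · -- windows of width ≤ 1; two elements share a window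
      have hw : ∀ j, (j = p ∨ j = q) → V j ≤ W j + 1 := by
        intro j hj
        have := hwidth j hj
        rw [if_neg hpq2] at this
        omega
      have htwo : ja = jb ∨ ja = jc ∨ jb = jc := by
        rcases hja with h1 | h1 <;> rcases hjb with h2 | h2 <;> rcases hjc with h3 | h3 <;>
          omega
      rcases htwo with h | h | h
      · rw [h] at hWa hVa
        have := hw jb hjb
        omega
      · rw [h] at hWa hVa
        have := hw jc hjc
        omega
      · rw [h] at hWb hVb
        have := hw jc hjc
        omega
  have hsubφ : φ ⊆ G := hsub
  have := Finset.card_sdiff_add_card_eq_card hsubφ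
  omega

lemma forward2 {k : ℕ} (hk : 1 ≤ k) {F : Finset ℕ} (hF : isFaceP (3 * k + 1) F)
    (hcard : F.card + 1 = k)
    (hnb : ∀ G, isFaceP (3 * k + 1) G → F ⊆ G → G.card ≤ k + 1) :
    ∃ p q, p ≤ q ∧ q < k ∧ F = (Finset.range (k - 1)).image (g2 p q) := by
  by_cases hk1 : k = 1
  · subst hk1
    have hF0 : F = ∅ := Finset.card_eq_zero.1 (by omega)
    exact ⟨0, 0, le_rfl, by omega, by simp [hF0]⟩
  have hk2 : 2 ≤ k := by omega
  obtain ⟨A, hFA, hsm⟩ := exists_enum F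
  have hm : 1 ≤ F.card := by omega
  obtain ⟨G, hGf, hFG, hGc⟩ := ext_face hF hm hFA hsm
  have hid := caps_sum hF hm hFA hsm
  have hm' : F.card = k - 1 := by omega
  rw [hm'] at hFA hsm hGc hid
  have hm1 : k - 1 + 1 = k := by omega
  rw [hm1] at hGc hid
  have hcaple : ∑ j ∈ Finset.range k, capA (3 * k + 1) (k - 1) A j ≤ 2 := by
    have := hnb G hGf hFG; omega
  have hSE_le : ∑ j ∈ Finset.range k, eA (3 * k + 1) (k - 1) A j ≤ k := by
    calc ∑ j ∈ Finset.range k, eA (3 * k + 1) (k - 1) A j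
        ≤ ∑ _j ∈ Finset.range k, 1 :=
          Finset.sum_le_sum (fun j _ => eA_le_one (3 * k + 1) (k - 1) A j)
      _ = k := by simp
  have hSC : ∑ j ∈ Finset.range k, capA (3 * k + 1) (k - 1) A j = 2 := by omega
  have hSEk : ∑ j ∈ Finset.range k, eA (3 * k + 1) (k - 1) A j = k := by omega
  have heall : ∀ j, j < k → eA (3 * k + 1) (k - 1) A j = 1 := by
    intro j hj
    by_contra hcj
    have hje : eA (3 * k + 1) (k - 1) A j = 0 := by
      have := eA_le_one (3 * k + 1) (k - 1) A j; omega
    have hadd := Finset.add_sum_erase (Finset.range k) (eA (3 * k + 1) (k - 1) A)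
      (mem_range.2 hj)
    have herase : ∑ x ∈ (Finset.range k).erase j, eA (3 * k + 1) (k - 1) A x ≤ k - 1 := by
      calc ∑ x ∈ (Finset.range k).erase j, eA (3 * k + 1) (k - 1) A x
          ≤ ∑ _x ∈ (Finset.range k).erase j, 1 :=
            Finset.sum_le_sum (fun x _ => eA_le_one (3 * k + 1) (k - 1) A x)
        _ = k - 1 := by
            rw [Finset.sum_const, smul_eq_mul, mul_one,
              Finset.card_erase_of_mem (mem_range.2 hj), Finset.card_range]
    omega
  obtain ⟨p, hpmem, q, hqmem, hpq, hform⟩ := sum_eq_two_support hSC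
  rw [mem_range] at hpmem hqmem
  have hmemF : ∀ i, i < k - 1 → A i ∈ F := by
    intro i hi; rw [hFA]; exact mem_image.2 ⟨i, mem_range.2 hi, rfl⟩
  have hbd : ∀ i, i < k - 1 → 1 ≤ A i ∧ A i ≤ 3 * k + 1 := by
    intro i hi; exact mem_Icc.1 (hF.1 (hmemF i hi))
  have hgap : ∀ i, i + 1 < k - 1 → A i + 2 ≤ A (i + 1) := by
    intro i hi
    exact hF.2 (A i) (hmemF i (by omega)) (A (i + 1)) (hmemF (i + 1) hi)
      (hsm i (i + 1) (by omega) hi)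
  have hAg : ∀ i, i < k - 1 → A i = g2 p q i := by
    intro i
    induction i with
    | zero =>
      intro h0
      have hc0 : capA (3 * k + 1) (k - 1) A 0 = (A 0 - 1) / 2 := by simp [capA]
      have he0 : eA (3 * k + 1) (k - 1) A 0 = (A 0 - 1) % 2 := by simp [eA]
      have hcv := hform 0 (mem_range.2 (by omega))
      have hev0 := heall 0 (by omega)
      rw [hc0] at hcv
      rw [he0] at hev0
      have hA01 := (hbd 0 h0).1
      unfold g2
      split_ifs at * <;> omega
    | succ i ih =>
      intro hi
      have hAi := ih (by omega)
      have hc1 : capA (3 * k + 1) (k - 1) A (i + 1) = (A (i + 1) - A i - 2) / 2 := by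
        simp [capA, hi]
      have he1 : eA (3 * k + 1) (k - 1) A (i + 1) = (A (i + 1) - A i - 2) % 2 := by
        simp [eA, hi]
      have hcv := hform (i + 1) (mem_range.2 (by omega))
      have hev1 := heall (i + 1) (by omega)
      rw [hc1] at hcv
      rw [he1] at hev1
      have hg := hgap i hi
      have hgoal : A (i + 1) = A i + 3 + 2 * ((if i + 1 = p then 1 else 0) +
          (if i + 1 = q then 1 else 0)) := by
        split_ifs at * <;> omega
      rw [hgoal, hAi]
      unfold g2
      split_ifs <;> omega
  refine ⟨p, q, hpq, hqmem, ?_⟩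
  rw [hFA]
  exact Finset.image_congr (fun i hi => hAg i (mem_range.1 hi))

lemma key_of_image_eq2 {k p q p' q' : ℕ}
    (heq : (Finset.range (k - 1)).image (g2 p q) = (Finset.range (k - 1)).image (g2 p' q')) :
    ∀ i, i < k - 1 → g2 p q i = g2 p' q' i := by
  have h1 : (fun i : Fin (k - 1) => g2 p q i.1) =
      ((Finset.range (k - 1)).image (g2 p q)).orderEmbOfFin card2 :=
    Finset.orderEmbOfFin_unique card2
      (fun x => mem_image.2 ⟨x.1, mem_range.2 x.2, rfl⟩)
      (fun a b hab => by
        have := g2_step (p := p) (q := q) (show (a : ℕ) < (b : ℕ) from hab); omega)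
  have h2 : (fun i : Fin (k - 1) => g2 p' q' i.1) =
      ((Finset.range (k - 1)).image (g2 p q)).orderEmbOfFin card2 :=
    Finset.orderEmbOfFin_unique card2
      (fun x => by rw [heq]; exact mem_image.2 ⟨x.1, mem_range.2 x.2, rfl⟩)
      (fun a b hab => by
        have := g2_step (p := p') (q := q') (show (a : ℕ) < (b : ℕ) from hab); omega)
  intro i hi
  have := congrFun (h1.trans h2.symm) ⟨i, hi⟩
  simpa using this

lemma inj2_q {k p q p' q' : ℕ} (hpq : p ≤ q) (hq : q < k) (hq' : q' < k)
    (hkey : ∀ i, i < k - 1 → g2 p q i = g2 p' q' i) : q' ≤ q := by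
  by_contra hcon
  push_neg at hcon
  have hqk : q < k - 1 := by omega
  have := hkey q hqk
  unfold g2 at this
  split_ifs at this <;> omega

lemma inj2_p {k p q p' q' : ℕ} (hpq : p ≤ q) (hpq' : p' ≤ q') (hq : q < k) (hq' : q' < k)
    (hqq : q = q') (hkey : ∀ i, i < k - 1 → g2 p q i = g2 p' q' i) : p' ≤ p := by
  by_contra hcon
  push_neg at hcon
  have hpk : p < k - 1 := by omega
  have := hkey p hpk
  subst hqq
  unfold g2 at this
  split_ifs at this <;> omega

lemma inj2 {k : ℕ} {p q p' q' : ℕ} (hpq : p ≤ q) (hq : q < k) (hpq' : p' ≤ q') (hq' : q' < k)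
    (heq : (Finset.range (k - 1)).image (g2 p q) = (Finset.range (k - 1)).image (g2 p' q')) :
    p = p' ∧ q = q' := by
  have hkey := key_of_image_eq2 heq
  have hkey' := key_of_image_eq2 heq.symm
  have hqq : q = q' := le_antisymm (inj2_q hpq' hq' hq hkey') (inj2_q hpq hq hq' hkey)
  exact ⟨le_antisymm (inj2_p hpq' hpq hq' hq hqq.symm hkey')
    (inj2_p hpq hpq' hq hq' hqq hkey), hqq⟩

lemma part3 {k : ℕ} (hk : 1 ≤ k) {F : Finset ℕ} (hF : isFaceP (3 * k + 1) F)
    (hcard : F.card + 2 = k) :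
    ∃ F', isFacetP (3 * k + 1) F' ∧ k + 1 < F'.card ∧ F ⊆ F' := by
  have hk2 : 2 ≤ k := by omega
  by_cases hm0 : F.card = 0
  · -- k = 2 and F = ∅
    have hk2' : k = 2 := by omega
    subst hk2'
    have hF0 : F = ∅ := Finset.card_eq_zero.1 hm0
    set G0 : Finset ℕ := (Finset.range 4).image (fun t => 2 * t + 1) with hG0
    have hface : isFaceP (3 * 2 + 1) G0 := by
      constructor
      · intro x hx
        obtain ⟨t, ht, rfl⟩ := mem_image.1 hx
        rw [mem_range] at ht
        rw [mem_Icc]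
        omega
      · intro x hx y hy hxy
        obtain ⟨t, ht, rfl⟩ := mem_image.1 hx
        obtain ⟨s, hs, rfl⟩ := mem_image.1 hy
        omega
    have hcardG0 : G0.card = 4 := by
      rw [hG0, Finset.card_image_of_injOn, Finset.card_range]
      intro a _ b _ hab
      dsimp only at hab
      omega
    obtain ⟨H, hH, hGH⟩ := exists_facet hface
    have hle := Finset.card_le_card hGH
    exact ⟨H, hH, by omega, by rw [hF0]; exact Finset.empty_subset _⟩
  · have hm : 1 ≤ F.card := by omega
    obtain ⟨A, hFA, hsm⟩ := exists_enum F
    obtain ⟨G, hGf, hFG, hGc⟩ := ext_face hF hm hFA hsm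
    have hid := caps_sum hF hm hFA hsm
    have hSE_le : ∑ j ∈ Finset.range (F.card + 1), eA (3 * k + 1) F.card A j ≤ F.card + 1 := by
      calc ∑ j ∈ Finset.range (F.card + 1), eA (3 * k + 1) F.card A j
          ≤ ∑ _j ∈ Finset.range (F.card + 1), 1 :=
            Finset.sum_le_sum (fun j _ => eA_le_one (3 * k + 1) F.card A j)
        _ = F.card + 1 := by simp
    have hSC4 : 4 ≤ ∑ j ∈ Finset.range (F.card + 1), capA (3 * k + 1) F.card A j := by
      omega
    obtain ⟨H, hH, hGH⟩ := exists_facet hGf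
    have hle := Finset.card_le_card hGH
    exact ⟨H, hH, by omega, hFG.trans hGH⟩

lemma count_params2 (k : ℕ) :
    (((Finset.range k) ×ˢ (Finset.range k)).filter (fun pq => pq.1 ≤ pq.2)).card =
      k * (k + 1) / 2 := by
  classical
  have hbij : ((Finset.range k) ×ˢ (Finset.range k)).filter (fun pq => pq.1 ≤ pq.2) =
      (Finset.range k).biUnion (fun q2 => (Finset.range (q2 + 1)).image (fun p2 => (p2, q2))) := by
    ext ⟨a, b⟩
    simp only [mem_filter, mem_product, mem_range, mem_biUnion, mem_image, Prod.mk.injEq]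
    constructor
    · rintro ⟨⟨ha, hb⟩, hab⟩
      exact ⟨b, hb, a, by omega, rfl, rfl⟩
    · rintro ⟨q2, hq2, p2, hp2, rfl, rfl⟩
      exact ⟨⟨by omega, hq2⟩, by omega⟩
  rw [hbij, Finset.card_biUnion]
  · have hterm : ∀ q2 ∈ Finset.range k,
        ((Finset.range (q2 + 1)).image (fun p2 => (p2, q2))).card = q2 + 1 := by
      intro q2 _
      rw [Finset.card_image_of_injOn, Finset.card_range]
      intro a _ b _ hab
      exact (Prod.mk.injEq _ _ _ _ ▸ hab).1
    rw [Finset.sum_congr rfl hterm]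
    have hshift : ∑ q2 ∈ Finset.range k, (q2 + 1) = ∑ i ∈ Finset.range (k + 1), i := by
      rw [Finset.sum_range_succ' (fun i => i) k]
      simp
    have hg := Finset.sum_range_id_mul_two (k + 1)
    have h2 : k * (k + 1) = (∑ i ∈ Finset.range (k + 1), i) * 2 := by
      rw [hg, Nat.add_sub_cancel, Nat.mul_comm]
    rw [hshift, h2, Nat.mul_div_cancel _ (by norm_num : 0 < 2)]
  · intro i hi j hj hij
    simp only [Finset.disjoint_left]
    rintro ⟨a, b⟩ hxi hxj
    obtain ⟨p2, _, heq⟩ := mem_image.1 hxi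
    obtain ⟨p3, _, heq'⟩ := mem_image.1 hxj
    apply hij
    have h1 := (Prod.mk.injEq _ _ _ _ ▸ heq).2
    have h2 := (Prod.mk.injEq _ _ _ _ ▸ heq').2
    omega

/-- In `Δ_{3k+1}`: the number of `k`-element faces contained in some facet of cardinality
`k + 1` but in no facet of cardinality greater than `k + 1` is `(k+1)^2`; the number of
such `(k-1)`-element faces is `k(k+1)/2`; and every `(k-2)`-element face is contained in
a facet of cardinality greater than `k + 1`. -/
theorem faces_counts_path3k_add_one (k : ℕ) (hk : 1 ≤ k) :
    ((Finset.Icc 1 (3 * k + 1)).powerset.filter fun F =>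
        isFaceP (3 * k + 1) F ∧ F.card = k ∧
          (∃ F', isFacetP (3 * k + 1) F' ∧ F'.card = k + 1 ∧ F ⊆ F') ∧
          ¬ ∃ F'', isFacetP (3 * k + 1) F'' ∧ k + 1 < F''.card ∧ F ⊆ F'').card
        = (k + 1) ^ 2 ∧
      ((Finset.Icc 1 (3 * k + 1)).powerset.filter fun F =>
          isFaceP (3 * k + 1) F ∧ F.card + 1 = k ∧
            (∃ F', isFacetP (3 * k + 1) F' ∧ F'.card = k + 1 ∧ F ⊆ F') ∧
            ¬ ∃ F'', isFacetP (3 * k + 1) F'' ∧ k + 1 < F''.card ∧ F ⊆ F'').card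
          = k * (k + 1) / 2 ∧
      ∀ F : Finset ℕ, isFaceP (3 * k + 1) F → F.card + 2 = k →
        ∃ F', isFacetP (3 * k + 1) F' ∧ k + 1 < F'.card ∧ F ⊆ F' := by
  classical
  refine ⟨?_, ?_, fun F hF hc => part3 hk hF hc⟩
  · -- part 1
    have hset : ((Finset.Icc 1 (3 * k + 1)).powerset.filter fun F =>
        isFaceP (3 * k + 1) F ∧ F.card = k ∧
          (∃ F', isFacetP (3 * k + 1) F' ∧ F'.card = k + 1 ∧ F ⊆ F') ∧
          ¬ ∃ F'', isFacetP (3 * k + 1) F'' ∧ k + 1 < F''.card ∧ F ⊆ F'') =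
        ((Finset.range (k + 1)) ×ˢ (Finset.range (k + 1))).image
          (fun pr => (Finset.range k).image (g1 pr.1 pr.2)) := by
      ext F
      constructor
      · intro hFmem
        rw [mem_filter, mem_powerset] at hFmem
        obtain ⟨hFsub, hface, hcard, hex, hnb⟩ := hFmem
        have hnb' := no_big_facet hnb
        obtain ⟨p, r, hp, hr, heq⟩ := forward1 hk hface hcard hnb'
        rw [mem_image]
        exact ⟨(p, r), mem_product.2 ⟨mem_range.2 hp, mem_range.2 hr⟩, heq.symm⟩
      · intro hFmem
        rw [mem_image] at hFmem
        obtain ⟨⟨p, r⟩, hpr, heq⟩ := hFmem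
        rw [mem_product, mem_range, mem_range] at hpr
        have hp : p ≤ k := by omega
        have hr : r ≤ k := by omega
        dsimp only at heq
        subst heq
        have hface := face1 (k := k) (p := p) (r := r) hk hp hr
        obtain ⟨H, hH, hsubH⟩ := exists_facet hface
        have hlb := facet_card_lb hH
        have hub := ub1 hk hp hr hH.1 hsubH
        rw [mem_filter, mem_powerset]
        refine ⟨hface.1, hface, card1, ⟨H, hH, by omega, hsubH⟩, ?_⟩
        rintro ⟨H', hH', hlt, hsub'⟩
        have := ub1 hk hp hr hH'.1 hsub'
        omega
    rw [hset, Finset.card_image_of_injOn, Finset.card_product, Finset.card_range]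
    · ring
    · rintro ⟨p, r⟩ h1 ⟨p', r'⟩ h2 heq
      simp only [Finset.mem_coe, mem_product, mem_range] at h1 h2
      dsimp only at heq
      obtain ⟨hpe, hre⟩ := inj1 (k := k) (by omega) (by omega) (by omega) (by omega) heq
      simp [Prod.ext_iff, hpe, hre]
  · -- part 2
    have hset : ((Finset.Icc 1 (3 * k + 1)).powerset.filter fun F =>
        isFaceP (3 * k + 1) F ∧ F.card + 1 = k ∧
          (∃ F', isFacetP (3 * k + 1) F' ∧ F'.card = k + 1 ∧ F ⊆ F') ∧
          ¬ ∃ F'', isFacetP (3 * k + 1) F'' ∧ k + 1 < F''.card ∧ F ⊆ F'') =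
        (((Finset.range k) ×ˢ (Finset.range k)).filter (fun pq => pq.1 ≤ pq.2)).image
          (fun pq => (Finset.range (k - 1)).image (g2 pq.1 pq.2)) := by
      ext F
      constructor
      · intro hFmem
        rw [mem_filter, mem_powerset] at hFmem
        obtain ⟨hFsub, hface, hcard, hex, hnb⟩ := hFmem
        have hnb' := no_big_facet hnb
        obtain ⟨p, q, hpq, hq, heq⟩ := forward2 hk hface hcard hnb'
        rw [mem_image]
        refine ⟨(p, q), ?_, heq.symm⟩
        rw [mem_filter, mem_product, mem_range, mem_range]
        exact ⟨⟨by omega, hq⟩, hpq⟩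
      · intro hFmem
        rw [mem_image] at hFmem
        obtain ⟨⟨p, q⟩, hpq', heq⟩ := hFmem
        rw [mem_filter, mem_product, mem_range, mem_range] at hpq'
        obtain ⟨⟨hpk, hqk⟩, hpq⟩ := hpq'
        dsimp only at heq
        subst heq
        have hface := face2 (k := k) (p := p) (q := q) hk hpk hqk
        obtain ⟨H, hH, hsubH⟩ := exists_facet hface
        have hlb := facet_card_lb hH
        have hub := ub2 hk hpq hqk hH.1 hsubH
        rw [mem_filter, mem_powerset]
        have hc2 : ((Finset.range (k - 1)).image (g2 p q)).card = k - 1 := card2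
        refine ⟨hface.1, hface, by omega, ⟨H, hH, by omega, hsubH⟩, ?_⟩
        rintro ⟨H', hH', hlt, hsub'⟩
        have := ub2 hk hpq hqk hH'.1 hsub'
        omega
    rw [hset, Finset.card_image_of_injOn, count_params2]
    rintro ⟨p, q⟩ h1 ⟨p', q'⟩ h2 heq
    simp only [Finset.mem_coe, mem_filter, mem_product, mem_range] at h1 h2
    dsimp only at heq
    obtain ⟨hpe, hqe⟩ := inj2 (k := k) h1.2 h1.1.2 h2.2 h2.1.2 heq
    simp [Prod.ext_iff, hpe, hqe]
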